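/- Mutual information version of the distance-based Fano inequality: with X uniform on finite S, X̂ taking values in S, ρ symmetric, and N_t^max = max_x |{x̂ : ρ(x,x̂) ≤ t}| < |S|, the probability P_t = P(ρ(X, X̂) > t) in any Markov chain X → Y → X̂ satisfies P_t ≥ 1 - (I(X; Y) + h(P_t)) / log(|S| / N_t^max). -/

import Mathlib

open Finset

open Classical in
noncomputable def pr {Ω : Type*} [Fintype Ω] (μ : Ω → ℝ) (p : Ω → Prop) : ℝ :=
  ∑ ω ∈ Finset.univ.filter p, μ ω

def IsPMF {Ω : Type*} [Fintype Ω] (μ : Ω → ℝ) : Prop :=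
  (∀ ω, 0 ≤ μ ω) ∧ ∑ ω, μ ω = 1

noncomputable def mutInfo {Ω A B : Type*} [Fintype Ω] [Fintype A] [Fintype B]
    (μ : Ω → ℝ) (X : Ω → A) (Y : Ω → B) : ℝ :=
  ∑ a : A, ∑ b : B, pr μ (fun ω => X ω = a ∧ Y ω = b) *
    Real.log (pr μ (fun ω => X ω = a ∧ Y ω = b) /
      (pr μ (fun ω => X ω = a) * pr μ (fun ω => Y ω = b)))

noncomputable def ent {Ω A : Type*} [Fintype Ω] [Fintype A] (μ : Ω → ℝ) (X : Ω → A) : ℝ :=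
  -∑ a : A, pr μ (fun ω => X ω = a) * Real.log (pr μ (fun ω => X ω = a))

noncomputable def condEnt {Ω A B : Type*} [Fintype Ω] [Fintype A] [Fintype B]
    (μ : Ω → ℝ) (X : Ω → A) (Y : Ω → B) : ℝ :=
  ent μ (fun ω => (X ω, Y ω)) - ent μ Y

noncomputable def binEnt (p : ℝ) : ℝ :=
  -(p * Real.log p) - (1 - p) * Real.log (1 - p)

/-- `X → Y → Z` is a Markov chain: `X` and `Z` are conditionally independent given `Y`. -/
def MarkovChain {Ω A B C : Type*} [Fintype Ω]
    (μ : Ω → ℝ) (X : Ω → A) (Y : Ω → B) (Z : Ω → C) : Prop :=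
  ∀ (a : A) (b : B) (c : C),
    pr μ (fun ω => X ω = a ∧ Y ω = b ∧ Z ω = c) * pr μ (fun ω => Y ω = b) =
      pr μ (fun ω => X ω = a ∧ Y ω = b) * pr μ (fun ω => Y ω = b ∧ Z ω = c)

open Classical in
noncomputable def ballCard {A : Type*} [Fintype A] (ρ : A → A → ℝ) (t : ℝ) (x : A) : ℕ :=
  (Finset.univ.filter fun x' => ρ x x' ≤ t).card

noncomputable def Ntmax {A : Type*} [Fintype A] (ρ : A → A → ℝ) (t : ℝ) : ℕ :=
  Finset.univ.sup (ballCard ρ t)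

section helpers
open Classical
variable {Ω : Type*} [Fintype Ω] (μ : Ω → ℝ)

lemma pr_congr {p q : Ω → Prop} (h : ∀ ω, p ω ↔ q ω) : pr μ p = pr μ q := by
  unfold pr; congr 1; apply Finset.filter_congr; intro ω _; exact h ω

lemma pr_nonneg (hμ : ∀ ω, 0 ≤ μ ω) (p : Ω → Prop) : 0 ≤ pr μ p :=
  Finset.sum_nonneg fun ω _ => hμ ω

lemma pr_mono (hμ : ∀ ω, 0 ≤ μ ω) {p q : Ω → Prop} (h : ∀ ω, p ω → q ω) :
    pr μ p ≤ pr μ q := by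
  unfold pr
  apply Finset.sum_le_sum_of_subset_of_nonneg
  · intro ω hω
    simp only [Finset.mem_filter, Finset.mem_univ, true_and] at *
    exact h ω hω
  · intro ω _ _
    exact hμ ω

lemma pr_le_total (p : Ω → Prop) (hμ : ∀ ω, 0 ≤ μ ω) : pr μ p ≤ ∑ ω, μ ω := by
  unfold pr
  exact Finset.sum_le_sum_of_subset_of_nonneg (Finset.filter_subset _ _)
    (fun ω _ _ => hμ ω)

lemma pr_of_forall (p : Ω → Prop) (h : ∀ ω, p ω) : pr μ p = ∑ ω, μ ω := by
  unfold pr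
  rw [Finset.filter_true_of_mem (fun ω _ => h ω)]

lemma pr_of_forall_not (p : Ω → Prop) (h : ∀ ω, ¬ p ω) : pr μ p = 0 := by
  unfold pr
  rw [Finset.filter_false_of_mem (fun ω _ => h ω)]
  simp

lemma pr_fiber {C : Type*} [Fintype C] (p : Ω → Prop) (Z : Ω → C) :
    ∑ c, pr μ (fun ω => p ω ∧ Z ω = c) = pr μ p := by
  unfold pr
  simp only [Finset.sum_filter]
  rw [Finset.sum_comm]
  apply Finset.sum_congr rfl
  intro ω _
  by_cases hp : p ω
  · rw [Finset.sum_eq_single (Z ω)]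
    · simp [hp]
    · intro b _ hb
      have : ¬ (p ω ∧ Z ω = b) := fun h => hb h.2.symm
      simp [this]
    · simp
  · simp [hp]

lemma pr_marg_sum {C : Type*} [Fintype C] (Z : Ω → C) (hμ : IsPMF μ) :
    ∑ c, pr μ (fun ω => Z ω = c) = 1 := by
  have h := pr_fiber μ (fun _ => True) Z
  have h2 : ∀ c, pr μ (fun ω => True ∧ Z ω = c) = pr μ (fun ω => Z ω = c) := by
    intro c; exact pr_congr μ (by simp)
  rw [Finset.sum_congr rfl (fun c _ => h2 c)] at h
  rw [h, pr_of_forall μ _ (fun _ => trivial), hμ.2]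

lemma gibbs {ι : Type*} (s : Finset ι) (p q : ι → ℝ) (hp : ∀ i ∈ s, 0 ≤ p i)
    (hq : ∀ i ∈ s, 0 ≤ q i) (hpq : ∀ i ∈ s, q i = 0 → p i = 0)
    (hsum : ∑ i ∈ s, q i ≤ ∑ i ∈ s, p i) :
    0 ≤ ∑ i ∈ s, p i * Real.log (p i / q i) := by
  have key : ∀ i ∈ s, p i - q i ≤ p i * Real.log (p i / q i) := by
    intro i hi
    rcases eq_or_lt_of_le (hp i hi) with h0 | h0
    · simp [← h0]
      exact hq i hi
    · have hq0 : 0 < q i := by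
        rcases eq_or_lt_of_le (hq i hi) with h1 | h1
        · exfalso
          have := hpq i hi h1.symm
          rw [this] at h0
          exact lt_irrefl 0 h0
        · exact h1
      have hlog := Real.log_le_sub_one_of_pos (div_pos hq0 h0)
      have hrw : Real.log (p i / q i) = - Real.log (q i / p i) := by
        rw [← Real.log_inv, inv_div]
      have hc : q i / p i * p i = q i := div_mul_cancel₀ _ (ne_of_gt h0)
      nlinarith
  calc (0:ℝ) ≤ ∑ i ∈ s, (p i - q i) := by rw [Finset.sum_sub_distrib]; linarith
    _ ≤ _ := Finset.sum_le_sum key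

end helpers

section dpi
open Classical
variable {Ω A B C : Type*} [Fintype Ω] [Fintype A] [Fintype B] [Fintype C]

lemma dpi (μ : Ω → ℝ) (hμ : IsPMF μ) (X : Ω → A) (Y : Ω → B) (Z : Ω → C)
    (hMC : MarkovChain μ X Y Z) : mutInfo μ X Z ≤ mutInfo μ X Y := by
  set w : A → B → C → ℝ := fun a b c => pr μ (fun ω => X ω = a ∧ Y ω = b ∧ Z ω = c) with hw
  set pXY : A → B → ℝ := fun a b => pr μ (fun ω => X ω = a ∧ Y ω = b) with hpXY
  set pXZ : A → C → ℝ := fun a c => pr μ (fun ω => X ω = a ∧ Z ω = c) with hpXZ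
  set pYZ : B → C → ℝ := fun b c => pr μ (fun ω => Y ω = b ∧ Z ω = c) with hpYZ
  set pX : A → ℝ := fun a => pr μ (fun ω => X ω = a) with hpX
  set pY : B → ℝ := fun b => pr μ (fun ω => Y ω = b) with hpY
  set pZ : C → ℝ := fun c => pr μ (fun ω => Z ω = c) with hpZ
  have hμ0 := hμ.1
  -- marginals
  have hw_c : ∀ a b, ∑ c, w a b c = pXY a b := by
    intro a b
    simp only [hw, hpXY]
    rw [← pr_fiber μ (fun ω => X ω = a ∧ Y ω = b) Z]
    exact Finset.sum_congr rfl fun c _ => pr_congr μ (by tauto)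
  have hw_b : ∀ a c, ∑ b, w a b c = pXZ a c := by
    intro a c
    simp only [hw, hpXZ]
    rw [← pr_fiber μ (fun ω => X ω = a ∧ Z ω = c) Y]
    exact Finset.sum_congr rfl fun b _ => pr_congr μ (by tauto)
  have hw_a : ∀ b c, ∑ a, w a b c = pYZ b c := by
    intro b c
    simp only [hw, hpYZ]
    rw [← pr_fiber μ (fun ω => Y ω = b ∧ Z ω = c) X]
    exact Finset.sum_congr rfl fun a _ => pr_congr μ (by tauto)
  have hXZ_a : ∀ c, ∑ a, pXZ a c = pZ c := by
    intro c
    simp only [hpXZ, hpZ]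
    rw [← pr_fiber μ (fun ω => Z ω = c) X]
    exact Finset.sum_congr rfl fun a _ => pr_congr μ (by tauto)
  have hYZ_b : ∀ c, ∑ b, pYZ b c = pZ c := by
    intro c
    simp only [hpYZ, hpZ]
    rw [← pr_fiber μ (fun ω => Z ω = c) Y]
    exact Finset.sum_congr rfl fun b _ => pr_congr μ (by tauto)
  have hXY_b : ∀ a, ∑ b, pXY a b = pX a := by
    intro a
    simp only [hpXY, hpX]
    rw [← pr_fiber μ (fun ω => X ω = a) Y]
  have hZtot : ∑ c, pZ c = 1 := pr_marg_sum μ Z hμ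
  have hwtot : ∑ x : A × B × C, w x.1 x.2.1 x.2.2 = 1 := by
    simp only [Fintype.sum_prod_type]
    calc ∑ a, ∑ b, ∑ c, w a b c = ∑ a, ∑ b, pXY a b := by
          exact Finset.sum_congr rfl fun a _ =>
            Finset.sum_congr rfl fun b _ => hw_c a b
      _ = ∑ a, pX a := Finset.sum_congr rfl fun a _ => hXY_b a
      _ = 1 := pr_marg_sum μ X hμ
  -- pointwise bounds
  have hw_nonneg : ∀ a b c, 0 ≤ w a b c := fun a b c => pr_nonneg μ hμ0 _
  have hw_le_XY : ∀ a b c, w a b c ≤ pXY a b := fun a b c => pr_mono μ hμ0 (by tauto)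
  have hw_le_XZ : ∀ a b c, w a b c ≤ pXZ a c := fun a b c => pr_mono μ hμ0 (by tauto)
  have hw_le_YZ : ∀ a b c, w a b c ≤ pYZ b c := fun a b c => pr_mono μ hμ0 (by tauto)
  have hw_le_X : ∀ a b c, w a b c ≤ pX a := fun a b c => pr_mono μ hμ0 (by tauto)
  have hw_le_Y : ∀ a b c, w a b c ≤ pY b := fun a b c => pr_mono μ hμ0 (by tauto)
  have hw_le_Z : ∀ a b c, w a b c ≤ pZ c := fun a b c => pr_mono μ hμ0 (by tauto)
  have hXZ_nonneg : ∀ a c, 0 ≤ pXZ a c := fun a c => pr_nonneg μ hμ0 _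
  have hYZ_nonneg : ∀ b c, 0 ≤ pYZ b c := fun b c => pr_nonneg μ hμ0 _
  have hZ_nonneg : ∀ c, 0 ≤ pZ c := fun c => pr_nonneg μ hμ0 _
  set F : A → B → ℝ := fun a b => Real.log (pXY a b / (pX a * pY b)) with hF
  set G : A → C → ℝ := fun a c => Real.log (pXZ a c / (pX a * pZ c)) with hG
  set q : A × B × C → ℝ := fun x => pXZ x.1 x.2.2 * pYZ x.2.1 x.2.2 / pZ x.2.2 with hq
  set wp : A × B × C → ℝ := fun x => w x.1 x.2.1 x.2.2 with hwp
  have hsum1 : mutInfo μ X Y = ∑ x : A × B × C, wp x * F x.1 x.2.1 := by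
    simp only [Fintype.sum_prod_type]
    have : mutInfo μ X Y = ∑ a, ∑ b, pXY a b * F a b := rfl
    rw [this]
    apply Finset.sum_congr rfl
    intro a _
    apply Finset.sum_congr rfl
    intro b _
    rw [← hw_c a b, Finset.sum_mul]
  have hsum2 : mutInfo μ X Z = ∑ x : A × B × C, wp x * G x.1 x.2.2 := by
    simp only [Fintype.sum_prod_type]
    have h0 : mutInfo μ X Z = ∑ a, ∑ c, pXZ a c * G a c := rfl
    rw [h0]
    apply Finset.sum_congr rfl
    intro a _
    rw [Finset.sum_comm]
    apply Finset.sum_congr rfl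
    intro c _
    rw [← hw_b a c, Finset.sum_mul]
  have key : ∀ x : A × B × C, wp x * F x.1 x.2.1 - wp x * G x.1 x.2.2 =
      wp x * Real.log (wp x / q x) := by
    rintro ⟨a, b, c⟩
    simp only [hwp, hq]
    by_cases hw0 : w a b c = 0
    · simp [hw0]
    have hwpos : 0 < w a b c := lt_of_le_of_ne (hw_nonneg a b c) (Ne.symm hw0)
    have hXY : 0 < pXY a b := lt_of_lt_of_le hwpos (hw_le_XY a b c)
    have hXZ : 0 < pXZ a c := lt_of_lt_of_le hwpos (hw_le_XZ a b c)
    have hYZ : 0 < pYZ b c := lt_of_lt_of_le hwpos (hw_le_YZ a b c)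
    have hX : 0 < pX a := lt_of_lt_of_le hwpos (hw_le_X a b c)
    have hY : 0 < pY b := lt_of_lt_of_le hwpos (hw_le_Y a b c)
    have hZ : 0 < pZ c := lt_of_lt_of_le hwpos (hw_le_Z a b c)
    have hmc : w a b c * pY b = pXY a b * pYZ b c := hMC a b c
    have hlogs := congrArg Real.log hmc
    rw [Real.log_mul hw0 hY.ne', Real.log_mul hXY.ne' hYZ.ne'] at hlogs
    have hlw : Real.log (w a b c) =
        Real.log (pXY a b) + Real.log (pYZ b c) - Real.log (pY b) := by linarith
    simp only [hF, hG]
    rw [Real.log_div hXY.ne' (mul_ne_zero hX.ne' hY.ne'),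
      Real.log_mul hX.ne' hY.ne',
      Real.log_div hXZ.ne' (mul_ne_zero hX.ne' hZ.ne'),
      Real.log_mul hX.ne' hZ.ne',
      Real.log_div hw0 (div_ne_zero (mul_ne_zero hXZ.ne' hYZ.ne') hZ.ne'),
      Real.log_div (mul_ne_zero hXZ.ne' hYZ.ne') hZ.ne',
      Real.log_mul hXZ.ne' hYZ.ne', hlw]
    ring
  have hqsum : ∑ x : A × B × C, q x ≤ ∑ x : A × B × C, wp x := by
    rw [hwtot]
    simp only [hq, Fintype.sum_prod_type]
    have hswap : ∑ a, ∑ b, ∑ c, pXZ a c * pYZ b c / pZ c =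
        ∑ c, ∑ a, ∑ b, pXZ a c * pYZ b c / pZ c := by
      have h1 : ∀ a : A, ∑ b, ∑ c, pXZ a c * pYZ b c / pZ c =
          ∑ c, ∑ b, pXZ a c * pYZ b c / pZ c := fun a => Finset.sum_comm
      rw [Finset.sum_congr rfl (fun a _ => h1 a), Finset.sum_comm]
    rw [hswap, ← hZtot]
    apply Finset.sum_le_sum
    intro c _
    have h1 : (∑ a, pXZ a c) * (∑ b, pYZ b c) / pZ c =
        ∑ a, ∑ b, pXZ a c * pYZ b c / pZ c := by
      rw [Finset.sum_mul, Finset.sum_div]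
      exact Finset.sum_congr rfl fun a _ => by rw [Finset.mul_sum, Finset.sum_div]
    rw [← h1, hXZ_a c, hYZ_b c]
    by_cases hz : pZ c = 0
    · simp [hz]
    · rw [mul_div_assoc, div_self hz, mul_one]
  have hgib : 0 ≤ ∑ x : A × B × C, wp x * Real.log (wp x / q x) := by
    apply gibbs Finset.univ wp q
    · intro x _
      exact hw_nonneg _ _ _
    · intro x _
      exact div_nonneg (mul_nonneg (hXZ_nonneg _ _) (hYZ_nonneg _ _)) (hZ_nonneg _)
    · rintro ⟨a, b, c⟩ _ h0
      simp only [hq] at h0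
      simp only [hwp]
      rcases div_eq_zero_iff.mp h0 with h1 | h1
      · rcases mul_eq_zero.mp h1 with h2 | h2
        · exact le_antisymm (h2 ▸ hw_le_XZ a b c) (hw_nonneg a b c)
        · exact le_antisymm (h2 ▸ hw_le_YZ a b c) (hw_nonneg a b c)
      · exact le_antisymm (h1 ▸ hw_le_Z a b c) (hw_nonneg a b c)
    · exact hqsum
  have hdiff : mutInfo μ X Y - mutInfo μ X Z =
      ∑ x : A × B × C, wp x * Real.log (wp x / q x) := by
    rw [hsum1, hsum2, ← Finset.sum_sub_distrib]
    exact Finset.sum_congr rfl fun x _ => key x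
  linarith [hdiff ▸ hgib]

end dpi

section stepB
open Classical

lemma stepB {Ω A : Type*} [Fintype Ω] [Fintype A]
    (μ : Ω → ℝ) (hμ : IsPMF μ) (X Xh : Ω → A)
    (hunif : ∀ a : A, pr μ (fun ω => X ω = a) = 1 / Fintype.card A)
    (ρ : A → A → ℝ) (hsymm : ∀ x x', ρ x x' = ρ x' x) (t : ℝ)
    (hN : 1 ≤ Fintype.card A) (hK : 1 ≤ Ntmax ρ t) :
    (1 - pr μ (fun ω => ρ (X ω) (Xh ω) > t)) *
        Real.log ((Fintype.card A : ℝ) / (Ntmax ρ t : ℝ)) -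
      binEnt (pr μ (fun ω => ρ (X ω) (Xh ω) > t)) ≤ mutInfo μ X Xh := by
  have hμ0 := hμ.1
  set N : ℝ := (Fintype.card A : ℝ) with hNdef
  set K : ℝ := (Ntmax ρ t : ℝ) with hKdef
  have hNpos : (0:ℝ) < N := by
    simp only [hNdef]; exact_mod_cast Nat.lt_of_lt_of_le Nat.zero_lt_one hN
  have hKpos : (0:ℝ) < K := by
    simp only [hKdef]; exact_mod_cast Nat.lt_of_lt_of_le Nat.zero_lt_one hK
  set p : A → A → ℝ := fun a c => pr μ (fun ω => X ω = a ∧ Xh ω = c) with hpdef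
  set pXh : A → ℝ := fun c => pr μ (fun ω => Xh ω = c) with hpXhdef
  set P : ℝ := pr μ (fun ω => ρ (X ω) (Xh ω) > t) with hPdef
  have hp_nn : ∀ a c, 0 ≤ p a c := fun a c => pr_nonneg μ hμ0 _
  have hp_le : ∀ a c, p a c ≤ pXh c := fun a c => pr_mono μ hμ0 (by tauto)
  have hpXh_nn : ∀ c, 0 ≤ pXh c := fun c => pr_nonneg μ hμ0 _
  have hp_a : ∀ c, ∑ a, p a c = pXh c := by
    intro c
    simp only [hpdef, hpXhdef]
    rw [← pr_fiber μ (fun ω => Xh ω = c) X]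
    exact Finset.sum_congr rfl fun a _ => pr_congr μ (by tauto)
  have hp_c : ∀ a, ∑ c, p a c = 1 / N := by
    intro a
    simp only [hpdef]
    rw [pr_fiber μ (fun ω => X ω = a) Xh, hunif a]
  have hXhtot : ∑ c, pXh c = 1 := pr_marg_sum μ Xh hμ
  have hptot : ∑ x : A × A, p x.1 x.2 = 1 := by
    simp only [Fintype.sum_prod_type]
    rw [Finset.sum_congr rfl fun a _ => hp_c a]
    rw [Finset.sum_const, nsmul_eq_mul]
    simp only [hNdef]
    field_simp
    rw [Finset.card_univ]
  have hP0 : 0 ≤ P := pr_nonneg μ hμ0 _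
  have hP1 : P ≤ 1 := by
    have := pr_le_total μ (fun ω => ρ (X ω) (Xh ω) > t) hμ0
    rw [hμ.2] at this
    exact this
  -- split P over the joint
  have hPsplit : P = ∑ x : A × A, (if ρ x.1 x.2 ≤ t then 0 else p x.1 x.2) := by
    have e2 : ∀ a c, pr μ (fun ω => ((ρ (X ω) (Xh ω) > t) ∧ X ω = a) ∧ Xh ω = c) =
        if ρ a c ≤ t then 0 else p a c := by
      intro a c
      by_cases h : ρ a c ≤ t
      · rw [if_pos h]
        apply pr_of_forall_not
        rintro ω ⟨⟨hE, ha⟩, hc⟩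
        rw [ha, hc] at hE
        exact absurd h (not_le.mpr hE)
      · rw [if_neg h]
        apply pr_congr
        intro ω
        constructor
        · rintro ⟨⟨_, ha⟩, hc⟩
          exact ⟨ha, hc⟩
        · rintro ⟨ha, hc⟩
          refine ⟨⟨?_, ha⟩, hc⟩
          rw [ha, hc]
          exact not_le.mp h
    simp only [Fintype.sum_prod_type]
    rw [Finset.sum_congr rfl fun a (_ : a ∈ univ) =>
      (Finset.sum_congr rfl fun c (_ : c ∈ univ) => (e2 a c).symm)]
    rw [Finset.sum_congr rfl fun a (_ : a ∈ univ) =>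
      pr_fiber μ (fun ω => (ρ (X ω) (Xh ω) > t) ∧ X ω = a) Xh]
    rw [pr_fiber μ (fun ω => ρ (X ω) (Xh ω) > t) X]
  have hQsplit : 1 - P = ∑ x : A × A, (if ρ x.1 x.2 ≤ t then p x.1 x.2 else 0) := by
    have hsum : ∑ x : A × A, (if ρ x.1 x.2 ≤ t then p x.1 x.2 else 0) +
        ∑ x : A × A, (if ρ x.1 x.2 ≤ t then 0 else p x.1 x.2) = 1 := by
      rw [← Finset.sum_add_distrib, ← hptot]
      apply Finset.sum_congr rfl
      intro x _
      by_cases h : ρ x.1 x.2 ≤ t <;> simp [h]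
    rw [hPsplit]
    linarith
  -- the comparison distribution
  set r : A → A → ℝ := fun a c => if ρ a c ≤ t then (1 - P) / K else P / N with hrdef
  set q : A × A → ℝ := fun x => pXh x.2 * r x.1 x.2 with hqdef
  have hr_nn : ∀ a c, 0 ≤ r a c := by
    intro a c
    simp only [hrdef]
    by_cases h : ρ a c ≤ t
    · rw [if_pos h]; exact div_nonneg (by linarith) hKpos.le
    · rw [if_neg h]; exact div_nonneg hP0 hNpos.le
  have hz1 : 1 - P = 0 → ∀ a c, ρ a c ≤ t → p a c = 0 := by
    intro h0 a c hac
    have hsum0 : ∑ x : A × A, (if ρ x.1 x.2 ≤ t then p x.1 x.2 else 0) = 0 := by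
      rw [← hQsplit, h0]
    have := (Finset.sum_eq_zero_iff_of_nonneg (fun x _ => by
      by_cases h : ρ x.1 x.2 ≤ t
      · simpa [h] using hp_nn x.1 x.2
      · simp [h])).mp hsum0 (a, c) (Finset.mem_univ _)
    simpa [hac] using this
  have hz2 : P = 0 → ∀ a c, ¬ (ρ a c ≤ t) → p a c = 0 := by
    intro h0 a c hac
    have hsum0 : ∑ x : A × A, (if ρ x.1 x.2 ≤ t then 0 else p x.1 x.2) = 0 := by
      rw [← hPsplit, h0]
    have := (Finset.sum_eq_zero_iff_of_nonneg (fun x _ => by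
      by_cases h : ρ x.1 x.2 ≤ t
      · simp [h]
      · simpa [h] using hp_nn x.1 x.2)).mp hsum0 (a, c) (Finset.mem_univ _)
    simpa [hac] using this
  have hq0 : ∀ x : A × A, q x = 0 → p x.1 x.2 = 0 := by
    rintro ⟨a, c⟩ h0
    simp only [hqdef] at h0
    rcases mul_eq_zero.mp h0 with h1 | h1
    · exact le_antisymm (h1 ▸ hp_le a c) (hp_nn a c)
    · simp only [hrdef] at h1
      by_cases h : ρ a c ≤ t
      · rw [if_pos h] at h1
        rcases div_eq_zero_iff.mp h1 with h2 | h2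
        · exact hz1 h2 a c h
        · exact absurd h2 hKpos.ne'
      · rw [if_neg h] at h1
        rcases div_eq_zero_iff.mp h1 with h2 | h2
        · exact hz2 h2 a c h
        · exact absurd h2 hNpos.ne'
  -- sum of q is at most 1
  have hrsum : ∀ c, ∑ a, r a c ≤ 1 := by
    intro c
    simp only [hrdef]
    rw [Finset.sum_ite, Finset.sum_const, Finset.sum_const, nsmul_eq_mul, nsmul_eq_mul]
    have hcard1 : ((univ.filter fun a => ρ a c ≤ t).card : ℝ) ≤ K := by
      have he : (univ.filter fun a => ρ a c ≤ t) = (univ.filter fun a => ρ c a ≤ t) := by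
        apply Finset.filter_congr
        intro a _
        rw [hsymm a c]
      rw [he]
      simp only [hKdef]
      exact_mod_cast Finset.le_sup (f := ballCard ρ t) (Finset.mem_univ c)
    have hcard2 : ((univ.filter fun a => ¬ ρ a c ≤ t).card : ℝ) ≤ N := by
      simp only [hNdef]
      exact_mod_cast Finset.card_filter_le _ _
    have h1 : ((univ.filter fun a => ρ a c ≤ t).card : ℝ) * ((1 - P) / K) ≤ 1 - P := by
      calc ((univ.filter fun a => ρ a c ≤ t).card : ℝ) * ((1 - P) / K)
          ≤ K * ((1 - P) / K) :=
            mul_le_mul_of_nonneg_right hcard1 (div_nonneg (by linarith) hKpos.le)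
        _ = 1 - P := by field_simp
    have h2 : ((univ.filter fun a => ¬ ρ a c ≤ t).card : ℝ) * (P / N) ≤ P := by
      calc ((univ.filter fun a => ¬ ρ a c ≤ t).card : ℝ) * (P / N)
          ≤ N * (P / N) := mul_le_mul_of_nonneg_right hcard2 (div_nonneg hP0 hNpos.le)
        _ = P := by field_simp
    linarith
  have hqsum : ∑ x : A × A, q x ≤ ∑ x : A × A, p x.1 x.2 := by
    rw [hptot]
    simp only [hqdef, Fintype.sum_prod_type]
    rw [Finset.sum_comm]
    calc ∑ c, ∑ a, pXh c * r a c = ∑ c, pXh c * ∑ a, r a c := by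
          exact Finset.sum_congr rfl fun c _ => (Finset.mul_sum _ _ _).symm
      _ ≤ ∑ c, pXh c * 1 := Finset.sum_le_sum fun c _ =>
          mul_le_mul_of_nonneg_left (hrsum c) (hpXh_nn c)
      _ = 1 := by simp only [mul_one]; exact hXhtot
  have hgib : 0 ≤ ∑ x : A × A, p x.1 x.2 * Real.log (p x.1 x.2 / q x) :=
    gibbs Finset.univ _ q (fun x _ => hp_nn x.1 x.2)
      (fun x _ => mul_nonneg (hpXh_nn x.2) (hr_nn x.1 x.2))
      (fun x _ h => hq0 x h) hqsum
  set C1 : ℝ := Real.log (N * ((1 - P) / K)) with hC1def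
  have hm : mutInfo μ X Xh =
      ∑ x : A × A, p x.1 x.2 * Real.log (p x.1 x.2 / ((1 / N) * pXh x.2)) := by
    have h0 : mutInfo μ X Xh = ∑ a, ∑ c, p a c *
        Real.log (p a c / (pr μ (fun ω => X ω = a) * pXh c)) := rfl
    rw [h0]
    simp only [Fintype.sum_prod_type]
    apply Finset.sum_congr rfl
    intro a _
    apply Finset.sum_congr rfl
    intro c _
    rw [hunif a]
  have keyB : ∀ x : A × A, p x.1 x.2 * Real.log (p x.1 x.2 / ((1 / N) * pXh x.2)) -
      p x.1 x.2 * Real.log (N * r x.1 x.2) = p x.1 x.2 * Real.log (p x.1 x.2 / q x) := by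
    rintro ⟨a, c⟩
    by_cases hp0 : p a c = 0
    · simp [hp0]
    have hppos : 0 < p a c := lt_of_le_of_ne (hp_nn a c) (Ne.symm hp0)
    have hpXhpos : 0 < pXh c := lt_of_lt_of_le hppos (hp_le a c)
    have hrpos : 0 < r a c := by
      simp only [hrdef]
      by_cases h : ρ a c ≤ t
      · rw [if_pos h]
        apply div_pos ?_ hKpos
        rcases eq_or_lt_of_le (by linarith : (0:ℝ) ≤ 1 - P) with h2 | h2
        · exact absurd (hz1 h2.symm a c h) hp0
        · exact h2
      · rw [if_neg h]
        apply div_pos ?_ hNpos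
        rcases eq_or_lt_of_le hP0 with h2 | h2
        · exact absurd (hz2 h2.symm a c h) hp0
        · exact h2
    simp only [hqdef]
    rw [Real.log_div hp0 (mul_ne_zero (one_div_ne_zero hNpos.ne') hpXhpos.ne'),
        Real.log_mul (one_div_ne_zero hNpos.ne') hpXhpos.ne',
        Real.log_mul hNpos.ne' hrpos.ne',
        Real.log_div hp0 (mul_ne_zero hpXhpos.ne' hrpos.ne'),
        Real.log_mul hpXhpos.ne' hrpos.ne',
        one_div, Real.log_inv]
    ring
  have hS2 : ∑ x : A × A, p x.1 x.2 * Real.log (N * r x.1 x.2) =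
      (1 - P) * C1 + P * Real.log P := by
    have hNP : N * (P / N) = P := by field_simp
    have term : ∀ x : A × A, p x.1 x.2 * Real.log (N * r x.1 x.2) =
        (if ρ x.1 x.2 ≤ t then p x.1 x.2 else 0) * C1 +
        (if ρ x.1 x.2 ≤ t then 0 else p x.1 x.2) * Real.log P := by
      rintro ⟨a, c⟩
      simp only [hrdef, hC1def]
      by_cases h : ρ a c ≤ t
      · rw [if_pos h, if_pos h, if_pos h, zero_mul, add_zero]
      · rw [if_neg h, if_neg h, if_neg h, hNP, zero_mul, zero_add]
    rw [Finset.sum_congr rfl fun x _ => term x, Finset.sum_add_distrib,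
        ← Finset.sum_mul, ← Finset.sum_mul, ← hQsplit, ← hPsplit]
  have hfinal : (1 - P) * C1 + P * Real.log P ≤ mutInfo μ X Xh := by
    have h1 : mutInfo μ X Xh - ((1 - P) * C1 + P * Real.log P) =
        ∑ x : A × A, p x.1 x.2 * Real.log (p x.1 x.2 / q x) := by
      rw [hm, ← hS2, ← Finset.sum_sub_distrib]
      exact Finset.sum_congr rfl fun x _ => keyB x
    have h2 := hgib
    rw [← h1] at h2
    linarith
  have hC1eq : (1 - P) * C1 =
      (1 - P) * Real.log (N / K) + (1 - P) * Real.log (1 - P) := by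
    rcases eq_or_lt_of_le (by linarith : (0:ℝ) ≤ 1 - P) with h2 | h2
    · rw [← h2]
      ring
    · have he : N * ((1 - P) / K) = (N / K) * (1 - P) := by ring
      simp only [hC1def]
      rw [he, Real.log_mul (div_ne_zero hNpos.ne' hKpos.ne') h2.ne']
      ring
  simp only [binEnt]
  linarith

end stepB


theorem distance_based_fano_mutual_info {Ω A B : Type*} [Fintype Ω] [Fintype A] [Fintype B]
    [DecidableEq A]
    (μ : Ω → ℝ) (hμ : IsPMF μ) (X : Ω → A) (Y : Ω → B) (Xh : Ω → A)
    (hMC : MarkovChain μ X Y Xh)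
    (hcard : 2 ≤ Fintype.card A)
    (hunif : ∀ a : A, pr μ (fun ω => X ω = a) = 1 / Fintype.card A)
    (ρ : A → A → ℝ) (hsymm : ∀ x x', ρ x x' = ρ x' x) (t : ℝ) (ht : 0 ≤ t)
    (hNmax : Ntmax ρ t < Fintype.card A) :
    pr μ (fun ω => ρ (X ω) (Xh ω) > t) ≥
      1 - (mutInfo μ X Y + binEnt (pr μ (fun ω => ρ (X ω) (Xh ω) > t))) /
        Real.log ((Fintype.card A : ℝ) / (Ntmax ρ t : ℝ)) := by
  by_cases hK0 : Ntmax ρ t = 0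
  · have hball : ∀ x x' : A, ¬ ρ x x' ≤ t := by
      intro x x' h
      have hmem : x' ∈ Finset.univ.filter (fun y => ρ x y ≤ t) := by
        simp [h]
      have hne : ballCard ρ t x ≠ 0 := by
        simp only [ballCard]
        exact Finset.card_ne_zero_of_mem hmem
      have hle : ballCard ρ t x ≤ Ntmax ρ t := Finset.le_sup (Finset.mem_univ x)
      omega
    have hP : pr μ (fun ω => ρ (X ω) (Xh ω) > t) = 1 := by
      rw [pr_of_forall μ _ (fun ω => lt_of_not_ge (hball (X ω) (Xh ω)))]
      exact hμ.2
    rw [hP, hK0]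
    simp
  · have hK1 : 1 ≤ Ntmax ρ t := Nat.one_le_iff_ne_zero.mpr hK0
    have hN1 : 1 ≤ Fintype.card A := le_trans (by norm_num) hcard
    have hB := stepB μ hμ X Xh hunif ρ hsymm t hN1 hK1
    have hD := dpi μ hμ X Y Xh hMC
    have hL : 0 < Real.log ((Fintype.card A : ℝ) / (Ntmax ρ t : ℝ)) := by
      apply Real.log_pos
      rw [one_lt_div (by exact_mod_cast Nat.lt_of_lt_of_le Nat.zero_lt_one hK1)]
      exact_mod_cast hNmax
    have h2 : 1 - pr μ (fun ω => ρ (X ω) (Xh ω) > t) ≤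
        (mutInfo μ X Y + binEnt (pr μ (fun ω => ρ (X ω) (Xh ω) > t))) /
          Real.log ((Fintype.card A : ℝ) / (Ntmax ρ t : ℝ)) := by
      rw [le_div_iff₀ hL]
      linarith
    linarith
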